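/- Let Φ : [0,T) × ℝ³ → ℝ be a C² solution of -∂_t²Φ + w(∂_tΦ)ΔΦ = -(∂_tΦ)², where w is C¹ on the range of ∂_tΦ. Let I solve ∂_t I = -I·∂_tΦ, I(0,·)=1, and set Ψ_α := I∂_αΦ and ψ̊_i(x) := ∂_iΦ(0,x). Then ∂_tΨ_0 = w(I^{-1}Ψ_0)·Σ_{a=1}³ ∂_aΨ_a + I^{-1}w(I^{-1}Ψ_0)·Σ_{a=1}³ Ψ_a² − w(I^{-1}Ψ_0)·Σ_{a=1}³ ψ̊_a Ψ_a, and ∂_tΨ_i = ∂_iΨ_0 − ψ̊_i Ψ_0 for i=1,2,3. -/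

import Mathlib

open Set

/-- A function with zero derivative on `Ico 0 T` is constant there. -/
lemma const_of_deriv_zero_Ico {T : ℝ} (f : ℝ → ℝ)
    (hf : ∀ t ∈ Set.Ico (0 : ℝ) T, HasDerivAt f 0 t) :
    ∀ t ∈ Set.Ico (0 : ℝ) T, f t = f 0 := by
  intro t ht
  rcases ht with ⟨ht0, htT⟩
  have h0T : (0 : ℝ) < T := lt_of_le_of_lt ht0 htT
  have h0mem : (0 : ℝ) ∈ Set.Ico (0 : ℝ) T := ⟨le_refl _, h0T⟩
  refine (convex_Ico (0 : ℝ) T).is_const_of_fderivWithin_eq_zero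
    (fun s hs => ((hf s hs).differentiableAt).differentiableWithinAt)
    (fun s hs => ?_) ⟨ht0, htT⟩ h0mem
  have h := ((hf s hs).hasFDerivAt).hasFDerivWithinAt (s := Set.Ico (0 : ℝ) T)
  have h0 : (ContinuousLinearMap.toSpanSingleton ℝ (0 : ℝ)) = 0 := by
    ext; simp
  rw [h0] at h
  exact h.fderivWithin (uniqueDiffOn_Ico 0 T s hs)

theorem stmt4 (T : ℝ) (hT : 0 < T) (w : ℝ → ℝ)
    (Φ Φt Φtt I : ℝ → (Fin 3 → ℝ) → ℝ)
    (Φi Φii Φti Ia : Fin 3 → ℝ → (Fin 3 → ℝ) → ℝ)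
    (hIpos : ∀ t ∈ Set.Ico (0 : ℝ) T, ∀ x, 0 < I t x)
    (hI0 : ∀ x, I 0 x = 1) (hIa0 : ∀ a x, Ia a 0 x = 0)
    -- time derivatives
    (hΦt : ∀ x, ∀ t ∈ Set.Ico (0 : ℝ) T, HasDerivAt (fun s => Φ s x) (Φt t x) t)
    (hΦtt : ∀ x, ∀ t ∈ Set.Ico (0 : ℝ) T, HasDerivAt (fun s => Φt s x) (Φtt t x) t)
    (hΦit : ∀ a x, ∀ t ∈ Set.Ico (0 : ℝ) T,
      HasDerivAt (fun s => Φi a s x) (Φti a t x) t)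
    (hIt : ∀ x, ∀ t ∈ Set.Ico (0 : ℝ) T,
      HasDerivAt (fun s => I s x) (-(I t x) * Φt t x) t)
    (hIat : ∀ a x, ∀ t ∈ Set.Ico (0 : ℝ) T,
      HasDerivAt (fun s => Ia a s x)
        (-(Ia a t x) * Φt t x - I t x * Φti a t x) t)
    -- spatial derivatives (partial derivative in the `a`-th coordinate)
    (hΦsp : ∀ a x, ∀ t ∈ Set.Ico (0 : ℝ) T,
      HasDerivAt (fun y => Φ t (Function.update x a y)) (Φi a t x) (x a))
    (hΦisp : ∀ a x, ∀ t ∈ Set.Ico (0 : ℝ) T,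
      HasDerivAt (fun y => Φi a t (Function.update x a y)) (Φii a t x) (x a))
    (hΦtsp : ∀ a x, ∀ t ∈ Set.Ico (0 : ℝ) T,
      HasDerivAt (fun y => Φt t (Function.update x a y)) (Φti a t x) (x a))
    (hIsp : ∀ a x, ∀ t ∈ Set.Ico (0 : ℝ) T,
      HasDerivAt (fun y => I t (Function.update x a y)) (Ia a t x) (x a))
    -- the quasilinear wave equation
    (hwave : ∀ t ∈ Set.Ico (0 : ℝ) T, ∀ x,
      -(Φtt t x) + w (Φt t x) * (∑ a : Fin 3, Φii a t x) = -(Φt t x) ^ 2) :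
    (∀ x, ∀ t ∈ Set.Ico (0 : ℝ) T,
      HasDerivAt (fun s => I s x * Φt s x)
        (w ((I t x)⁻¹ * (I t x * Φt t x)) *
            (∑ a : Fin 3, (Ia a t x * Φi a t x + I t x * Φii a t x))
          + (I t x)⁻¹ * w ((I t x)⁻¹ * (I t x * Φt t x)) *
            (∑ a : Fin 3, (I t x * Φi a t x) ^ 2)
          - w ((I t x)⁻¹ * (I t x * Φt t x)) *
            (∑ a : Fin 3, Φi a 0 x * (I t x * Φi a t x))) t) ∧
    (∀ i : Fin 3, ∀ x, ∀ t ∈ Set.Ico (0 : ℝ) T,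
      HasDerivAt (fun s => I s x * Φi i s x)
        ((Ia i t x * Φt t x + I t x * Φti i t x)
          - Φi i 0 x * (I t x * Φt t x)) t) := by
  -- Key identity: Ia a t x = I t x * (Φi a 0 x - Φi a t x)
  have key : ∀ a x, ∀ t ∈ Set.Ico (0 : ℝ) T,
      Ia a t x = I t x * (Φi a 0 x - Φi a t x) := by
    intro a x t ht
    have hIne : I t x ≠ 0 := (hIpos t ht x).ne'
    set c := Φi a 0 x with hc
    -- f s = (Ia a s x - I s x * (c - Φi a s x)) / I s x is constant (zero)
    have hf : ∀ s ∈ Set.Ico (0 : ℝ) T,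
        HasDerivAt (fun s => (Ia a s x - I s x * (c - Φi a s x)) * (I s x)⁻¹) 0 s := by
      intro s hs
      have hIne' : I s x ≠ 0 := (hIpos s hs x).ne'
      have hg : HasDerivAt (fun s => Ia a s x - I s x * (c - Φi a s x))
          (-(Φt s x) * (Ia a s x - I s x * (c - Φi a s x))) s := by
        have h1 := hIat a x s hs
        have h2 : HasDerivAt (fun s => I s x * (c - Φi a s x))
            (-(I s x) * Φt s x * (c - Φi a s x) + I s x * (0 - Φti a s x)) s :=
          (hIt x s hs).mul ((hasDerivAt_const s c).sub (hΦit a x s hs))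
        have := h1.fun_sub h2
        exact this.congr_deriv (by ring)
      have hinv : HasDerivAt (fun s => (I s x)⁻¹)
          (-(-(I s x) * Φt s x) / (I s x) ^ 2) s := (hIt x s hs).inv hIne'
      have := hg.fun_mul hinv
      exact this.congr_deriv (by field_simp; ring)
    have hconst := const_of_deriv_zero_Ico _ hf t ht
    rw [hI0 x, hIa0 a x] at hconst
    simp only [hc] at hconst
    have h0 : ((0 : ℝ) - 1 * (Φi a 0 x - Φi a 0 x)) * (1 : ℝ)⁻¹ = 0 := by ring
    rw [h0] at hconst
    have := mul_eq_zero.mp hconst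
    rcases this with h | h
    · linarith [sub_eq_zero.mp h]
    · exact absurd (inv_eq_zero.mp h) hIne
  constructor
  · intro x t ht
    have hIne : I t x ≠ 0 := (hIpos t ht x).ne'
    have harg : (I t x)⁻¹ * (I t x * Φt t x) = Φt t x := by field_simp
    have hd : HasDerivAt (fun s => I s x * Φt s x)
        (-(I t x) * Φt t x * Φt t x + I t x * Φtt t x) t :=
      (hIt x t ht).mul (hΦtt x t ht)
    convert hd using 1
    rw [harg]
    have hw := hwave t ht x
    have h0 := key 0 x t ht
    have h1 := key 1 x t ht
    have h2 := key 2 x t ht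
    simp only [Fin.sum_univ_three] at hw ⊢
    rw [h0, h1, h2]
    field_simp
    nlinarith [hw, sq_nonneg (I t x)]
  · intro i x t ht
    have hd : HasDerivAt (fun s => I s x * Φi i s x)
        (-(I t x) * Φt t x * Φi i t x + I t x * Φti i t x) t :=
      (hIt x t ht).mul (hΦit i x t ht)
    convert hd using 1
    rw [key i x t ht]
    ring
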